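/- Let M be a finite 𝐁-module with basis B, and let b ∈ B. Then: (1) if the b-coordinate of x ∈ M (with respect to B) is 1, then for every y ∈ M the b-coordinate of x + y is also 1; (2) if b = x₁ + ⋯ + x_k for some x₁, …, x_k ∈ M, then each x_i equals b or 0; (3) the basis of M is unique: B is the only basis of M. -/
import Mathlib


/-- A module over the Boolean semiring `𝐁 = {0,1}` (with `1 + 1 = 1`) is the same
thing as a commutative additive monoid in which addition is idempotent. -/
def IsBoolModule (M : Type*) [AddCommMonoid M] : Prop :=
  ∀ x : M, x + x = x

/-- `B` is a basis of the `𝐁`-module `M`: every element of `M` is a unique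
`𝐁`-linear combination (i.e. a unique sum of a subset) of elements of `B`. -/
def IsBoolBasis {M : Type*} [AddCommMonoid M] (B : Finset M) : Prop :=
  ∀ x : M, ∃! s : Finset M, s ⊆ B ∧ x = ∑ b ∈ s, b

section Aux

variable {M : Type*} [AddCommMonoid M] [DecidableEq M]

lemma idem_sum (hM : IsBoolModule M) {ι : Type*} [DecidableEq ι] {s : Finset ι} {g : ι → M} {i : ι}
    (hi : i ∈ s) : g i + ∑ j ∈ s, g j = ∑ j ∈ s, g j := by
  rw [← Finset.add_sum_erase s g hi, ← add_assoc, hM]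

lemma mem_rep (hB : IsBoolBasis (M := M) B) {b z : M}
    (hb : b ∈ B) (hz : b + z = z) {t : Finset M} (ht : t ⊆ B) (hzt : z = ∑ c ∈ t, c) :
    b ∈ t := by
  by_contra h
  have h1 : insert b t ⊆ B := Finset.insert_subset hb ht
  have h2 : z = ∑ c ∈ insert b t, c := by
    rw [Finset.sum_insert h, ← hzt, hz]
  obtain ⟨s, -, hu⟩ := hB z
  have heq : t = insert b t := (hu t ⟨ht, hzt⟩).trans (hu (insert b t) ⟨h1, h2⟩).symm
  have : b ∈ t := by rw [heq]; exact Finset.mem_insert_self b t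
  exact h this

lemma zero_not_mem (hB : IsBoolBasis (M := M) B) : (0 : M) ∉ B := by
  intro h0
  obtain ⟨s, -, hu⟩ := hB 0
  have h1 : (∅ : Finset M) ⊆ B ∧ (0 : M) = ∑ c ∈ (∅ : Finset M), c := by simp
  have h2 : ({0} : Finset M) ⊆ B ∧ (0 : M) = ∑ c ∈ ({0} : Finset M), c := by
    simp [h0]
  have := (hu ∅ h1).trans (hu {0} h2).symm
  exact Finset.singleton_ne_empty 0 this.symm

lemma summand (hM : IsBoolModule M) (hB : IsBoolBasis (M := M) B) {b : M}
    (hb : b ∈ B) {ι : Type*} [DecidableEq ι] {s : Finset ι} {g : ι → M} (h : b = ∑ i ∈ s, g i)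
    {i : ι} (hi : i ∈ s) : g i = b ∨ g i = 0 := by
  have hgb : g i + b = b := by rw [h]; exact idem_sum hM hi
  obtain ⟨t, ⟨ht, hx⟩, -⟩ := hB (g i)
  have hsub : t ⊆ {b} := by
    intro c hc
    have hcgi : c + g i = g i := by
      rw [hx]; exact idem_sum (g := fun c => c) hM hc
    have hcb : c + b = b := by rw [← hgb, ← add_assoc, hcgi]
    have hbsum : b = ∑ c ∈ ({b} : Finset M), c := by simp
    exact mem_rep hB (ht hc) hcb (Finset.singleton_subset_iff.mpr hb) hbsum
  rcases Finset.subset_singleton_iff.mp hsub with h' | h'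
  · right; rw [hx, h']; simp
  · left; rw [hx, h']; simp

end Aux

theorem stmt18 {M : Type*} [AddCommMonoid M] [Fintype M] [DecidableEq M]
    (hM : IsBoolModule M) (B : Finset M) (hB : IsBoolBasis B) (b : M) (hb : b ∈ B) :
    -- (1) if the b-coordinate of x is 1, then the b-coordinate of x + y is also 1
    (∀ (x y : M) (s t : Finset M), s ⊆ B → x = ∑ c ∈ s, c → b ∈ s →
      t ⊆ B → x + y = ∑ c ∈ t, c → b ∈ t) ∧
    -- (2) if b = x₁ + ⋯ + x_k then each xᵢ equals b or 0
    (∀ (k : ℕ) (f : Fin k → M), b = ∑ i : Fin k, f i →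
      ∀ i : Fin k, f i = b ∨ f i = 0) ∧
    -- (3) the basis of M is unique
    (∀ B' : Finset M, IsBoolBasis B' → B' = B) := by
  refine ⟨?_, ?_, ?_⟩
  · intro x y s t hs hx hbs ht hxy
    have hbx : b + x = x := by rw [hx]; exact idem_sum (g := fun c => c) hM hbs
    have hbxy : b + (x + y) = x + y := by rw [← add_assoc, hbx]
    exact mem_rep hB hb hbxy ht hxy
  · intro k f h i
    exact summand hM hB hb h (Finset.mem_univ i)
  · intro B' hB'
    have key : ∀ (C C' : Finset M), IsBoolBasis C → IsBoolBasis C' → C ⊆ C' := by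
      intro C C' hC hC' c hc
      obtain ⟨t, ⟨ht, hx⟩, -⟩ := hC' c
      have hall : ∀ d ∈ t, d = c ∨ d = 0 :=
        fun d hd => summand (g := fun c => c) hM hC hc hx hd
      have hsub : t ⊆ {c} := by
        intro d hd
        rcases hall d hd with h' | h'
        · simpa using h'
        · exact absurd (h' ▸ ht hd) (zero_not_mem hC')
      rcases Finset.subset_singleton_iff.mp hsub with h' | h'
      · exfalso
        have : c = 0 := by rw [hx, h']; simp
        exact zero_not_mem hC (this ▸ hc)
      · exact ht (h' ▸ Finset.mem_singleton_self c)
    exact Finset.Subset.antisymm (key B' B hB' hB) (key B B' hB hB')
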